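/- Let V be a finite group, U a cyclic normal subgroup with (V:U) = p^α, and suppose V = V_p × U_{p'} is the direct product of a Sylow p-subgroup V_p and the Hall p'-part U_{p'} of U. Then the number of cosets vU ∈ V/U such that ⟨v, U⟩ is cyclic equals the number of cosets wU_p ∈ V_p/U_p such that ⟨w, U_p⟩ is cyclic. -/

import Mathlib

open Subgroup

lemma my_isCyclic_zpowers {G : Type*} [Group G] (g : G) : IsCyclic ↥(Subgroup.zpowers g) := by
  refine ⟨⟨⟨g, Subgroup.mem_zpowers g⟩, fun x => ?_⟩⟩
  obtain ⟨n, hn⟩ := Subgroup.mem_zpowers_iff.mp x.2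
  exact ⟨n, Subtype.ext (by simpa using hn)⟩

lemma my_mem_zpowers_mul {G : Type*} [Group G] {a b : G} (h : Commute a b)
    (hco : Nat.Coprime (orderOf a) (orderOf b)) : a ∈ Subgroup.zpowers (a * b) := by
  set n := orderOf a with hn
  set m := orderOf b with hm
  have hbez : (1 : ℤ) = n * Nat.gcdA n m + m * Nat.gcdB n m := by
    have h1 := Nat.gcd_eq_gcd_ab n m
    rw [Nat.Coprime.gcd_eq_one hco] at h1
    exact_mod_cast h1
  have han : a ^ (n : ℤ) = 1 := by rw [zpow_natCast, hn, pow_orderOf_eq_one]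
  have hbm : b ^ (m : ℤ) = 1 := by rw [zpow_natCast, hm, pow_orderOf_eq_one]
  refine Subgroup.mem_zpowers_iff.mpr ⟨(m : ℤ) * Nat.gcdB n m, ?_⟩
  calc (a * b) ^ ((m : ℤ) * Nat.gcdB n m)
      = a ^ ((m : ℤ) * Nat.gcdB n m) * b ^ ((m : ℤ) * Nat.gcdB n m) := h.mul_zpow _
    _ = a ^ ((m : ℤ) * Nat.gcdB n m) * (b ^ (m : ℤ)) ^ (Nat.gcdB n m) := by
        rw [← zpow_mul]
    _ = a ^ ((m : ℤ) * Nat.gcdB n m) := by rw [hbm, one_zpow, mul_one]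
    _ = a ^ ((1 : ℤ) - n * Nat.gcdA n m) := by
        rw [show ((m : ℤ) * Nat.gcdB n m) = (1 : ℤ) - n * Nat.gcdA n m by omega]
    _ = a := by rw [zpow_sub, zpow_one, zpow_mul, han, one_zpow, inv_one, mul_one]

lemma my_zpowers_sup {G : Type*} [Group G] {a b : G} (h : Commute a b)
    (hco : Nat.Coprime (orderOf a) (orderOf b)) :
    Subgroup.zpowers a ⊔ Subgroup.zpowers b = Subgroup.zpowers (a * b) := by
  apply le_antisymm
  · refine sup_le (Subgroup.zpowers_le.mpr (my_mem_zpowers_mul h hco))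
      (Subgroup.zpowers_le.mpr ?_)
    have := my_mem_zpowers_mul h.symm hco.symm
    rwa [← h.eq] at this
  · exact Subgroup.zpowers_le.mpr
      (Subgroup.mul_mem _ (Subgroup.mem_sup_left (Subgroup.mem_zpowers a))
        (Subgroup.mem_sup_right (Subgroup.mem_zpowers b)))

lemma my_sup_zpowers_eq {G : Type*} [Group G] {N : Subgroup G} {v v' : G}
    (h : v⁻¹ * v' ∈ N) : N ⊔ Subgroup.zpowers v = N ⊔ Subgroup.zpowers v' := by
  have key : ∀ x y : G, x⁻¹ * y ∈ N → Subgroup.zpowers y ≤ N ⊔ Subgroup.zpowers x := by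
    intro x y hxy
    rw [Subgroup.zpowers_le]
    have hyx : y = x * (x⁻¹ * y) := by group
    rw [hyx]
    exact Subgroup.mul_mem _ (Subgroup.mem_sup_right (Subgroup.mem_zpowers x))
      (Subgroup.mem_sup_left hxy)
  refine le_antisymm (sup_le le_sup_left (key _ _ ?_)) (sup_le le_sup_left (key _ _ h))
  simpa [mul_inv_rev] using N.inv_mem h

lemma my_isCyclic_congr {G H : Type*} [Group G] [Group H] (e : G ≃* H) :
    IsCyclic G ↔ IsCyclic H :=
  ⟨fun h => by haveI := h; exact isCyclic_of_surjective e.toMonoidHom e.surjective,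
   fun h => by haveI := h; exact isCyclic_of_surjective e.symm.toMonoidHom e.symm.surjective⟩

theorem artin_stmt13 {V : Type*} [Group V] [Finite V] {p α : ℕ}
    (hp : p.Prime) (U : Subgroup V) [U.Normal] (hUc : IsCyclic U)
    (hidx : U.index = p ^ α)
    (Up Up' : Subgroup V) (hUpU : Up ≤ U) (hUp'U : Up' ≤ U)
    (hUpP : IsPGroup p Up) (hUp'P : ¬ p ∣ Nat.card Up')
    (hsup : Up ⊔ Up' = U) (hinf : Up ⊓ Up' = ⊥)
    (Vp : Sylow p V) (hZ : U ≤ Subgroup.center V)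
    (hVsup : (Vp : Subgroup V) ⊔ Up' = ⊤) (hVinf : (Vp : Subgroup V) ⊓ Up' = ⊥) :
    Nat.card {x : V ⧸ U | ∃ v : V, QuotientGroup.mk v = x ∧
        IsCyclic ↥(U ⊔ Subgroup.zpowers v)} =
      Nat.card {y : ↥(Vp : Subgroup V) ⧸ (Up.subgroupOf (Vp : Subgroup V)) |
        ∃ w : ↥(Vp : Subgroup V), QuotientGroup.mk w = y ∧
          IsCyclic ↥((Up.subgroupOf (Vp : Subgroup V)) ⊔ Subgroup.zpowers w)} := by
  classical
  have hUpC : Up ≤ Subgroup.center V := hUpU.trans hZ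
  have hUp'C : Up' ≤ Subgroup.center V := hUp'U.trans hZ
  haveI hUp'n : Up'.Normal := by
    constructor
    intro x hx g
    have hcc : g * x * g⁻¹ = x := by
      rw [Subgroup.mem_center_iff.mp (hUp'C hx) g, mul_inv_cancel_right]
    rw [hcc]; exact hx
  have hUpVp : Up ≤ (Vp : Subgroup V) := by
    have h1 : Up ≤ Subgroup.normalizer (Vp : Set V) :=
      hUpC.trans (Subgroup.center_le_normalizer _)
    have h2 := hUpP.inf_normalizer_sylow Vp
    rw [inf_eq_left.mpr h1] at h2
    exact h2.le.trans inf_le_right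
  -- decomposition
  have hdecomp : ∀ v : V, ∃ w : ↥(Vp : Subgroup V), ∃ b ∈ Up', v = ↑w * b := by
    intro v
    have hv : v ∈ (↑((Vp : Subgroup V) ⊔ Up') : Set V) := by
      rw [hVsup]; trivial
    rw [Subgroup.mul_normal] at hv
    obtain ⟨x, hx, y, hy, hxy⟩ := hv
    exact ⟨⟨x, hx⟩, y, hy, hxy.symm⟩
  -- normality of Up.subgroupOf Vp
  haveI hnorm : (Up.subgroupOf (Vp : Subgroup V)).Normal := by
    constructor
    intro x hx g
    rw [Subgroup.mem_subgroupOf] at hx ⊢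
    have hcc : (↑g : V) * ↑x * (↑g)⁻¹ = ↑x := by
      rw [Subgroup.mem_center_iff.mp (hUpC hx) ↑g, mul_inv_cancel_right]
    show ((↑g * ↑x * (↑g)⁻¹ : V) ∈ Up)
    rw [hcc]; exact hx
  -- the homomorphism and the equivalence
  set φ : ↥(Vp : Subgroup V) →* V ⧸ U :=
    (QuotientGroup.mk' U).comp (Vp : Subgroup V).subtype with hφ
  have hkerφ : φ.ker = Up.subgroupOf (Vp : Subgroup V) := by
    rw [hφ, ← MonoidHom.comap_ker, QuotientGroup.ker_mk', Subgroup.comap_subtype]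
    ext x
    rw [Subgroup.mem_subgroupOf, Subgroup.mem_subgroupOf]
    constructor
    · intro hx
      have hx' : (↑x : V) ∈ (↑(Up ⊔ Up') : Set V) := by rw [hsup]; exact hx
      rw [Subgroup.mul_normal] at hx'
      obtain ⟨u, hu, b, hb, hub⟩ := hx'
      have hbVp : b ∈ (Vp : Subgroup V) := by
        have : b = u⁻¹ * ↑x := by rw [← hub]; group
        rw [this]
        exact Subgroup.mul_mem _ (Subgroup.inv_mem _ (hUpVp hu)) x.2
      have : b ∈ (Vp : Subgroup V) ⊓ Up' := ⟨hbVp, hb⟩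
      rw [hVinf, Subgroup.mem_bot] at this
      rw [← hub, this]; simpa using hu
    · intro hx; exact hUpU hx
  have hsurjφ : Function.Surjective φ := by
    intro x
    obtain ⟨v, rfl⟩ := QuotientGroup.mk_surjective x
    obtain ⟨w, b, hb, hvwb⟩ := hdecomp v
    refine ⟨w, ?_⟩
    show QuotientGroup.mk (↑w : V) = QuotientGroup.mk v
    refine (QuotientGroup.eq).mpr ?_
    rw [hvwb]
    simpa using hUp'U hb
  set e : (↥(Vp : Subgroup V) ⧸ Up.subgroupOf (Vp : Subgroup V)) ≃* V ⧸ U :=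
    (QuotientGroup.quotientMulEquivOfEq hkerφ.symm).trans
      (QuotientGroup.quotientKerEquivOfSurjective φ hsurjφ) with he
  have heapp : ∀ w : ↥(Vp : Subgroup V),
      e (QuotientGroup.mk w) = QuotientGroup.mk (↑w : V) := by
    intro w
    rw [he]
    simp only [MulEquiv.trans_apply, QuotientGroup.quotientMulEquivOfEq_mk]
    rfl
  -- key cyclicity transfer
  have hQC : ∀ w : ↥(Vp : Subgroup V),
      IsCyclic ↥(Up.subgroupOf (Vp : Subgroup V) ⊔ Subgroup.zpowers w) ↔
        IsCyclic ↥(U ⊔ Subgroup.zpowers (↑w : V)) := by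
    intro w
    have hmap : (Up.subgroupOf (Vp : Subgroup V) ⊔ Subgroup.zpowers w).map
        (Vp : Subgroup V).subtype = Up ⊔ Subgroup.zpowers (↑w : V) := by
      rw [Subgroup.map_sup, Subgroup.subgroupOf_map_subtype, inf_eq_left.mpr hUpVp,
        MonoidHom.map_zpowers]
      rfl
    have e1 :
        ↥(Up.subgroupOf (Vp : Subgroup V) ⊔ Subgroup.zpowers w) ≃*
          ↥(Up ⊔ Subgroup.zpowers (↑w : V)) :=
      (Subgroup.equivMapOfInjective _ _ (Vp : Subgroup V).subtype_injective).trans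
        (MulEquiv.subgroupCongr hmap)
    rw [my_isCyclic_congr e1]
    -- now: IsCyclic ↥(Up ⊔ zpowers ↑w) ↔ IsCyclic ↥(U ⊔ zpowers ↑w)
    have hgen : ∀ (H : Subgroup V) (x : ↥H), (∀ y, y ∈ Subgroup.zpowers x) →
        H = Subgroup.zpowers (↑x : V) := by
      intro H x hx
      have h1 : Subgroup.zpowers x = (⊤ : Subgroup ↥H) := (Subgroup.eq_top_iff' _).mpr hx
      calc H = ((⊤ : Subgroup ↥H)).map H.subtype := by
              rw [← MonoidHom.range_eq_map, Subgroup.range_subtype]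
        _ = (Subgroup.zpowers x).map H.subtype := by rw [h1]
        _ = Subgroup.zpowers (↑x : V) := by rw [MonoidHom.map_zpowers]; rfl
    have hAle : Up ⊔ Subgroup.zpowers (↑w : V) ≤ U ⊔ Subgroup.zpowers (↑w : V) :=
      sup_le (hUpU.trans le_sup_left) le_sup_right
    constructor
    · intro hA
      haveI := hA
      obtain ⟨a, ha⟩ := IsCyclic.exists_generator (α := ↥(Up ⊔ Subgroup.zpowers (↑w : V)))
      have hAz := hgen _ a ha
      haveI : IsCyclic ↥Up' := by
        haveI := hUc
        exact Subgroup.isCyclic_of_le hUp'U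
      obtain ⟨b, hbgen⟩ := IsCyclic.exists_generator (α := ↥Up')
      have hBz := hgen _ b hbgen
      have hcomm : Commute (↑a : V) (↑b : V) :=
        Subgroup.mem_center_iff.mp (hUp'C b.2) ↑a
      -- coprimality of orders
      have hAVp : Up ⊔ Subgroup.zpowers (↑w : V) ≤ (Vp : Subgroup V) :=
        sup_le hUpVp (Subgroup.zpowers_le.mpr w.2)
      obtain ⟨k, hk⟩ := (Vp.isPGroup'.to_le hAVp) a
      have hoa : orderOf (↑a : V) ∣ p ^ k := by
        rw [Subgroup.orderOf_coe]
        exact orderOf_dvd_of_pow_eq_one hk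
      have hob : orderOf (↑b : V) ∣ Nat.card ↥Up' := by
        rw [Subgroup.orderOf_coe]
        exact orderOf_dvd_natCard b
      have hco : Nat.Coprime (orderOf (↑a : V)) (orderOf (↑b : V)) := by
        refine Nat.Coprime.coprime_dvd_left hoa (Nat.Coprime.pow_left k ?_)
        refine (Nat.Prime.coprime_iff_not_dvd hp).mpr fun hdvd => hUp'P ?_
        exact hdvd.trans hob
      have heq : U ⊔ Subgroup.zpowers (↑w : V) = Subgroup.zpowers ((↑a : V) * ↑b) := by
        calc U ⊔ Subgroup.zpowers (↑w : V)
            = (Up ⊔ Subgroup.zpowers (↑w : V)) ⊔ Up' := by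
              rw [← hsup, sup_right_comm]
          _ = Subgroup.zpowers (↑a : V) ⊔ Subgroup.zpowers (↑b : V) := by
              rw [← hAz, ← hBz]
          _ = Subgroup.zpowers ((↑a : V) * ↑b) := my_zpowers_sup hcomm hco
      rw [heq]
      exact my_isCyclic_zpowers _
    · intro hU
      haveI := hU
      exact Subgroup.isCyclic_of_le hAle
  -- the predicate correspondence
  have hiff : ∀ y : ↥(Vp : Subgroup V) ⧸ Up.subgroupOf (Vp : Subgroup V),
      (∃ w : ↥(Vp : Subgroup V), QuotientGroup.mk w = y ∧
          IsCyclic ↥((Up.subgroupOf (Vp : Subgroup V)) ⊔ Subgroup.zpowers w)) ↔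
      (∃ v : V, QuotientGroup.mk v = e y ∧ IsCyclic ↥(U ⊔ Subgroup.zpowers v)) := by
    intro y
    constructor
    · rintro ⟨w, rfl, hcyc⟩
      exact ⟨↑w, (heapp w).symm, (hQC w).mp hcyc⟩
    · rintro ⟨v, hv, hcyc⟩
      obtain ⟨w, b, hb, hvwb⟩ := hdecomp v
      have hmk : (QuotientGroup.mk (↑w : V) : V ⧸ U) = QuotientGroup.mk v := by
        refine (QuotientGroup.eq).mpr ?_
        rw [hvwb]; simpa using hUp'U hb
      have hwy : QuotientGroup.mk w = y := by
        apply e.injective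
        rw [heapp w, hmk, hv]
      have hsupeq : U ⊔ Subgroup.zpowers v = U ⊔ Subgroup.zpowers (↑w : V) := by
        apply my_sup_zpowers_eq
        have : v⁻¹ * ↑w = b⁻¹ := by rw [hvwb]; group
        rw [this]; exact U.inv_mem (hUp'U hb)
      rw [hsupeq] at hcyc
      exact ⟨w, hwy, (hQC w).mpr hcyc⟩
  -- conclude
  exact (Nat.card_congr (Equiv.subtypeEquiv e.toEquiv hiff)).symm
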